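/- Let T be a twist on H ⊗ H with P_{T,n} ≥ 0 for all n. For ξ ∈ H and η ∈ H^{⊗n}, one has ⟨ξ ⊗ η, P_{T,n+1}(ξ ⊗ η)⟩ ≤ (Σ_{k=0}^{n} ‖T‖^k) ‖ξ‖² ⟨η, P_{T,n} η⟩. Consequently, the creation operator a*(ξ) : η ↦ ξ ⊗ η extends to a bounded operator from the Hilbert space completion of (H^{⊗n}, ⟨·, P_{T,n} ·⟩) to that of (H^{⊗(n+1)}, ⟨·, P_{T,n+1} ·⟩) with norm at most (Σ_{k=0}^{n} ‖T‖^k)^{1/2} ‖ξ‖. -/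

import Mathlib

/-!
STATEMENT 5: Let `T` be a twist on `H ⊗ H` (all `P_{T,n} ≥ 0`).  For `ξ ∈ H` and
`η ∈ H^{⊗n}`, `⟨ξ ⊗ η, P_{T,n+1}(ξ ⊗ η)⟩ ≤ (Σ_{k=0}^n ‖T‖^k) ‖ξ‖² ⟨η, P_{T,n} η⟩`.
Consequently the creation operator `a*(ξ) : η ↦ ξ ⊗ η` is bounded from the twisted
`n`-particle space to the twisted `(n+1)`-particle space with norm at most
`(Σ_{k=0}^n ‖T‖^k)^{1/2} ‖ξ‖` (second conclusion, stated on the defining seminorms).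
Here `tens n ξ η = ξ ⊗ η : H ⊗ H^{⊗n} = H^{⊗(n+1)}` and `amp n = 1 ⊗ ·`.
-/

noncomputable section

open ContinuousLinearMap in
private lemma factor_of_isPositive {F : Type*} [NormedAddCommGroup F] [InnerProductSpace ℂ F]
    [CompleteSpace F] {A : F →L[ℂ] F} (hA : A.IsPositive) :
    ∃ s : F →L[ℂ] F, ∀ x y : F, (inner ℂ x (A y) : ℂ) = inner ℂ (s x) (s y) := by
  have hA' : (0 : F →L[ℂ] F) ≤ A := (ContinuousLinearMap.nonneg_iff_isPositive A).mpr hA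
  refine ⟨CFC.sqrt A, fun x y => ?_⟩
  set s := CFC.sqrt A with hs
  have hs0 : (0 : F →L[ℂ] F) ≤ s := CFC.sqrt_nonneg A
  have hsa : IsSelfAdjoint s := IsSelfAdjoint.of_nonneg hs0
  have hmul : s * s = A := CFC.sqrt_mul_sqrt_self A hA'
  have hadj : ContinuousLinearMap.adjoint s = s := hsa.adjoint_eq
  calc (inner ℂ x (A y) : ℂ) = inner ℂ x (s (s y)) := by rw [← hmul]; rfl
    _ = inner ℂ (s x) (s y) := by
        rw [← ContinuousLinearMap.adjoint_inner_left, hadj]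

private lemma map_isPositive {F G : Type*} [NormedAddCommGroup F] [InnerProductSpace ℂ F]
    [CompleteSpace F] [NormedAddCommGroup G] [InnerProductSpace ℂ G] [CompleteSpace G]
    (φ : (F →L[ℂ] F) →⋆ₐ[ℂ] (G →L[ℂ] G)) {A : F →L[ℂ] F} (hA : A.IsPositive) :
    (φ A).IsPositive := by
  have hA' : (0 : F →L[ℂ] F) ≤ A := (ContinuousLinearMap.nonneg_iff_isPositive A).mpr hA
  have h1 : star (CFC.sqrt A) = CFC.sqrt A :=
    (IsSelfAdjoint.of_nonneg (CFC.sqrt_nonneg (a := A)))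
  have h2 : A = star (CFC.sqrt A) * CFC.sqrt A := by
    rw [h1, CFC.sqrt_mul_sqrt_self A hA']
  rw [← ContinuousLinearMap.nonneg_iff_isPositive, h2, map_mul, map_star]
  exact star_mul_self_nonneg _


private lemma inner_self_re {F : Type*} [NormedAddCommGroup F] [InnerProductSpace ℂ F]
    (z : F) : (inner ℂ z z : ℂ).re = ‖z‖ ^ 2 := by
  rw [inner_self_eq_norm_sq_to_K]
  simp [← Complex.ofReal_pow]

private lemma key_ineq {F : Type*} [NormedAddCommGroup F] [InnerProductSpace ℂ F]
    [CompleteSpace F] (Q R : F →L[ℂ] F) (hQ : Q.IsPositive) (hP : (Q * R).IsPositive)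
    {c : ℝ} (hc : ‖R‖ ≤ c) (x : F) :
    (inner ℂ x ((Q * R) x) : ℂ).re ≤ c * (inner ℂ x (Q x) : ℂ).re := by
  obtain ⟨s, hsQ⟩ := factor_of_isPositive hQ
  obtain ⟨t, htP⟩ := factor_of_isPositive hP
  have hc0 : 0 ≤ c := le_trans (norm_nonneg R) hc
  set u : ℕ → ℝ := fun k => ‖s ((R ^ k) x)‖ with hu
  set v : ℕ → ℝ := fun k => ‖t ((R ^ k) x)‖ with hv
  have hun : ∀ k, 0 ≤ u k := fun k => norm_nonneg _
  have hvn : ∀ k, 0 ≤ v k := fun k => norm_nonneg _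
  have hy : ∀ k, (R ^ (k + 1)) x = R ((R ^ k) x) := by
    intro k
    rw [pow_succ']
    rfl
  -- inner ℂ self identities
  have hQself : ∀ z : F, (inner ℂ z (Q z) : ℂ).re = ‖s z‖ ^ 2 := by
    intro z; rw [hsQ, inner_self_re]
  have hPself : ∀ z : F, (inner ℂ z ((Q * R) z) : ℂ).re = ‖t z‖ ^ 2 := by
    intro z; rw [htP, inner_self_re]
  -- v k ^ 2 ≤ u k * u (k+1)
  have huv : ∀ k, v k ^ 2 ≤ u k * u (k + 1) := by
    intro k
    have h1 : v k ^ 2 = (inner ℂ ((R ^ k) x) (Q (R ((R ^ k) x))) : ℂ).re := by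
      rw [← hPself]; rfl
    rw [h1, hsQ, ← hy]
    calc (inner ℂ (s ((R ^ k) x)) (s ((R ^ (k + 1)) x)) : ℂ).re
        ≤ ‖(inner ℂ (s ((R ^ k) x)) (s ((R ^ (k + 1)) x)) : ℂ)‖ := Complex.re_le_norm _
      _ ≤ u k * u (k + 1) := norm_inner_le_norm _ _
  -- u (k+1) ^ 2 ≤ v (k+1) * v k
  have hvu : ∀ k, u (k + 1) ^ 2 ≤ v (k + 1) * v k := by
    intro k
    have h1 : u (k + 1) ^ 2 = (inner ℂ ((R ^ (k + 1)) x) ((Q * R) ((R ^ k) x)) : ℂ).re := by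
      rw [← hQself]
      congr 2
      show Q ((R ^ (k+1)) x) = Q (R ((R ^ k) x))
      rw [hy]
    rw [h1, htP]
    calc (inner ℂ (t ((R ^ (k + 1)) x)) (t ((R ^ k) x)) : ℂ).re
        ≤ ‖(inner ℂ (t ((R ^ (k + 1)) x)) (t ((R ^ k) x)) : ℂ)‖ := Complex.re_le_norm _
      _ ≤ v (k + 1) * v k := norm_inner_le_norm _ _
  -- growth bound
  have hub : ∀ k, u k ≤ ‖s‖ * ‖x‖ * c ^ k := by
    intro k
    have hRk : ‖R ^ k‖ ≤ c ^ k := by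
      induction k with
      | zero => simpa [ContinuousLinearMap.one_def] using ContinuousLinearMap.norm_id_le
      | succ k ih =>
        calc ‖R ^ (k + 1)‖ = ‖R ^ k * R‖ := by rw [pow_succ]
          _ ≤ ‖R ^ k‖ * ‖R‖ := norm_mul_le _ _
          _ ≤ c ^ k * c := mul_le_mul ih hc (norm_nonneg _) (pow_nonneg hc0 _)
          _ = c ^ (k + 1) := (pow_succ c k).symm
    calc u k ≤ ‖s‖ * ‖(R ^ k) x‖ := ContinuousLinearMap.le_opNorm _ _
      _ ≤ ‖s‖ * (‖R ^ k‖ * ‖x‖) := by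
          exact mul_le_mul_of_nonneg_left (ContinuousLinearMap.le_opNorm _ _) (norm_nonneg s)
      _ ≤ ‖s‖ * (c ^ k * ‖x‖) := by
          have := mul_le_mul_of_nonneg_right hRk (norm_nonneg x)
          exact mul_le_mul_of_nonneg_left this (norm_nonneg s)
      _ = ‖s‖ * ‖x‖ * c ^ k := by ring
  -- log-convexity
  have hconv : ∀ k, u (k + 1) ^ 2 ≤ u k * u (k + 2) := by
    intro k
    rcases eq_or_lt_of_le (hun (k + 1)) with h0 | h0
    · have : u (k + 1) ^ 2 = 0 := by rw [← h0]; ring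
      rw [this]; exact mul_nonneg (hun k) (hun (k + 2))
    · have h4 : u (k + 1) ^ 2 * u (k + 1) ^ 2 ≤ (u k * u (k + 2)) * u (k + 1) ^ 2 := by
        calc u (k + 1) ^ 2 * u (k + 1) ^ 2 ≤ (v (k + 1) * v k) * (v (k + 1) * v k) := by
              apply mul_le_mul (hvu k) (hvu k) (by positivity)
              exact mul_nonneg (hvn _) (hvn _)
          _ = v (k + 1) ^ 2 * v k ^ 2 := by ring
          _ ≤ (u (k + 1) * u (k + 2)) * (u k * u (k + 1)) := by
              apply mul_le_mul (huv (k + 1)) (huv k) (by positivity)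
              exact mul_nonneg (hun _) (hun _)
          _ = (u k * u (k + 2)) * u (k + 1) ^ 2 := by ring
      exact le_of_mul_le_mul_right h4 (by positivity)
  -- u 1 * u k ≤ u 0 * u (k + 1)
  have hC : ∀ k, u 1 * u k ≤ u 0 * u (k + 1) := by
    intro k
    induction k with
    | zero => rw [mul_comm]
    | succ k ih =>
      rcases eq_or_lt_of_le (hun (k + 1)) with h0 | h0
      · rw [← h0, mul_zero]; exact mul_nonneg (hun 0) (hun (k + 2))
      · have h4 : (u 1 * u (k + 1)) * u (k + 1) ≤ (u 0 * u (k + 2)) * u (k + 1) := by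
          calc (u 1 * u (k + 1)) * u (k + 1) = u 1 * u (k + 1) ^ 2 := by ring
            _ ≤ u 1 * (u k * u (k + 2)) :=
              mul_le_mul_of_nonneg_left (hconv k) (hun 1)
            _ = (u 1 * u k) * u (k + 2) := by ring
            _ ≤ (u 0 * u (k + 1)) * u (k + 2) :=
              mul_le_mul_of_nonneg_right ih (hun (k + 2))
            _ = (u 0 * u (k + 2)) * u (k + 1) := by ring
        exact le_of_mul_le_mul_right h4 h0
  -- u 1 ^ k * u 0 ≤ u 0 ^ k * u k
  have hPk : ∀ k, u 1 ^ k * u 0 ≤ u 0 ^ k * u k := by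
    intro k
    induction k with
    | zero => simp
    | succ k ih =>
      calc u 1 ^ (k + 1) * u 0 = u 1 * (u 1 ^ k * u 0) := by ring
        _ ≤ u 1 * (u 0 ^ k * u k) := mul_le_mul_of_nonneg_left ih (hun 1)
        _ = u 0 ^ k * (u 1 * u k) := by ring
        _ ≤ u 0 ^ k * (u 0 * u (k + 1)) :=
          mul_le_mul_of_nonneg_left (hC k) (pow_nonneg (hun 0) k)
        _ = u 0 ^ (k + 1) * u (k + 1) := by ring
  -- main claim : u 1 ≤ c * u 0
  have hu1 : u 1 ≤ c * u 0 := by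
    rcases eq_or_lt_of_le (hun 0) with h0 | h0
    · -- u 0 = 0
      have hv0 : v 0 ^ 2 ≤ 0 := by
        have := huv 0; rw [← h0, zero_mul] at this; exact this
      have hv0' : v 0 = 0 := by nlinarith [hvn 0]
      have hu1' : u 1 ^ 2 ≤ 0 := by
        have := hvu 0; rw [hv0', mul_zero] at this; exact this
      have : u 1 = 0 := by nlinarith [hun 1]
      rw [this, ← h0, mul_zero]
    · by_contra hlt
      push_neg at hlt
      set M := ‖s‖ * ‖x‖ with hM
      have hM0 : 0 ≤ M := mul_nonneg (norm_nonneg _) (norm_nonneg _)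
      have hbound : ∀ k, u 1 ^ k * u 0 ≤ M * (c * u 0) ^ k := by
        intro k
        calc u 1 ^ k * u 0 ≤ u 0 ^ k * u k := hPk k
          _ ≤ u 0 ^ k * (M * c ^ k) :=
            mul_le_mul_of_nonneg_left (hub k) (pow_nonneg (le_of_lt h0) k)
          _ = M * (c * u 0) ^ k := by rw [mul_pow]; ring
      rcases eq_or_lt_of_le (mul_nonneg hc0 (le_of_lt h0)) with hcu | hcu
      · have h1 := hbound 1
        rw [pow_one, pow_one, ← hcu, mul_zero] at h1
        have hu1pos : 0 < u 1 := hcu ▸ hlt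
        nlinarith
      · have hr : 1 < u 1 / (c * u 0) := (one_lt_div hcu).mpr hlt
        obtain ⟨k, hk⟩ := pow_unbounded_of_one_lt (M / u 0) hr
        have : (u 1 / (c * u 0)) ^ k ≤ M / u 0 := by
          rw [div_pow, div_le_div_iff₀ (pow_pos hcu k) h0]
          exact hbound k
        linarith
  -- conclude
  have h1 : (inner ℂ x ((Q * R) x) : ℂ).re = v 0 ^ 2 := by
    have : (R ^ 0) x = x := by rw [pow_zero]; rfl
    rw [← this, hPself]
  have h2 : (inner ℂ x (Q x) : ℂ).re = u 0 ^ 2 := by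
    have : (R ^ 0) x = x := by rw [pow_zero]; rfl
    rw [← this, hQself]
  rw [h1, h2]
  calc v 0 ^ 2 ≤ u 0 * u 1 := huv 0
    _ ≤ u 0 * (c * u 0) := mul_le_mul_of_nonneg_left hu1 (hun 0)
    _ = c * u 0 ^ 2 := by ring


variable {E : ℕ → Type*} [∀ n, NormedAddCommGroup (E n)] [∀ n, InnerProductSpace ℂ (E n)]
  [∀ n, CompleteSpace (E n)]

/-- `chainT T n k = T₁ T₂ ⋯ T_k`. -/
def chainT (T : ∀ n, ℕ → (E n →L[ℂ] E n)) (n : ℕ) : ℕ → (E n →L[ℂ] E n)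
  | 0 => 1
  | k + 1 => chainT T n k * T n (k + 1)

/-- `Rop T n = 1 + T₁ + T₁T₂ + ⋯ + T₁⋯T_{n-1}`. -/
def Rop (T : ∀ n, ℕ → (E n →L[ℂ] E n)) (n : ℕ) : E n →L[ℂ] E n :=
  ∑ k ∈ Finset.range n, chainT T n k

/-- `P_{T,1} = 1`, `P_{T,n+1} = (1 ⊗ P_{T,n}) R_{T,n+1}`. -/
def Pop (T : ∀ n, ℕ → (E n →L[ℂ] E n))
    (amp : ∀ n, (E n →L[ℂ] E n) →⋆ₐ[ℂ] (E (n + 1) →L[ℂ] E (n + 1))) :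
    ∀ n, E n →L[ℂ] E n
  | 0 => 1
  | n + 1 => amp n (Pop T amp n) * Rop T (n + 1)

theorem stmt5 {H : Type*} [NormedAddCommGroup H] [InnerProductSpace ℂ H] [CompleteSpace H]
    (T : ∀ n, ℕ → (E n →L[ℂ] E n))
    (amp : ∀ n, (E n →L[ℂ] E n) →⋆ₐ[ℂ] (E (n + 1) →L[ℂ] E (n + 1)))
    (hamp : ∀ n k, 1 ≤ k → k ≤ n - 1 → amp n (T n k) = T (n + 1) (k + 1))
    (hsa : ∀ n k, 1 ≤ k → k ≤ n - 1 → IsSelfAdjoint (T n k))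
    -- the elementary tensor map `tens n ξ η = ξ ⊗ η ∈ H^{⊗(n+1)}`
    (tens : ∀ n, H →ₗ[ℂ] E n →ₗ[ℂ] E (n + 1))
    (htinner : ∀ n (ξ ξ' : H) (η η' : E n),
      (inner ℂ (tens n ξ η) (tens n ξ' η') : ℂ) = (inner ℂ ξ ξ' : ℂ) * (inner ℂ η η' : ℂ))
    (htamp : ∀ n (A : E n →L[ℂ] E n) (ξ : H) (η : E n),
      amp n A (tens n ξ η) = tens n ξ (A η))
    (q : ℝ) (hq0 : 0 ≤ q)
    -- `q = ‖T‖`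
    (hqnorm : ∀ n k, 1 ≤ k → k ≤ n - 1 → ‖T n k‖ ≤ q)
    -- `T` is a twist: all `P_{T,n}` are positive
    (hpos : ∀ n, (Pop T amp n).IsPositive) :
    ∀ n (ξ : H) (η : E n),
      (inner ℂ (tens n ξ η) (Pop T amp (n + 1) (tens n ξ η)) : ℂ).re ≤
        (∑ k ∈ Finset.range (n + 1), q ^ k) * ‖ξ‖ ^ 2 *
          (inner ℂ η (Pop T amp n η) : ℂ).re ∧
      Real.sqrt ((inner ℂ (tens n ξ η) (Pop T amp (n + 1) (tens n ξ η)) : ℂ).re) ≤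
        Real.sqrt (∑ k ∈ Finset.range (n + 1), q ^ k) * ‖ξ‖ *
          Real.sqrt ((inner ℂ η (Pop T amp n η) : ℂ).re) := by
  intro n ξ η
  set Q := amp n (Pop T amp n) with hQdef
  set R := Rop T (n + 1) with hRdef
  set c : ℝ := ∑ k ∈ Finset.range (n + 1), q ^ k with hcdef
  have hc0 : 0 ≤ c := Finset.sum_nonneg fun k _ => pow_nonneg hq0 k
  have hQ : Q.IsPositive := map_isPositive (amp n) (hpos n)
  have hPQR : Pop T amp (n + 1) = Q * R := rfl
  have hP : (Q * R).IsPositive := hPQR ▸ hpos (n + 1)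
  -- norm bound on R
  have hchain : ∀ k, k ≤ n → ‖chainT T (n + 1) k‖ ≤ q ^ k := by
    intro k
    induction k with
    | zero =>
      intro _
      simpa [chainT, pow_zero, ContinuousLinearMap.one_def] using
        (ContinuousLinearMap.norm_id_le : ‖ContinuousLinearMap.id ℂ (E (n + 1))‖ ≤ 1)
    | succ k ih =>
      intro hk
      have h1 : ‖chainT T (n + 1) k‖ ≤ q ^ k := ih (by omega)
      have h2 : ‖T (n + 1) (k + 1)‖ ≤ q := hqnorm (n + 1) (k + 1) (by omega) (by omega)
      calc ‖chainT T (n + 1) (k + 1)‖ = ‖chainT T (n + 1) k * T (n + 1) (k + 1)‖ := rfl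
        _ ≤ ‖chainT T (n + 1) k‖ * ‖T (n + 1) (k + 1)‖ := norm_mul_le _ _
        _ ≤ q ^ k * q := mul_le_mul h1 h2 (norm_nonneg _) (pow_nonneg hq0 k)
        _ = q ^ (k + 1) := (pow_succ q k).symm
  have hRnorm : ‖R‖ ≤ c := by
    rw [hRdef, Rop, hcdef]
    refine (norm_sum_le _ _).trans (Finset.sum_le_sum fun k hk => ?_)
    exact hchain k (by have := Finset.mem_range.mp hk; omega)
  have hkey := key_ineq Q R hQ hP hRnorm (tens n ξ η)
  -- compute the Q-inner ℂ product
  have hQx : (inner ℂ (tens n ξ η) (Q (tens n ξ η)) : ℂ).re =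
      ‖ξ‖ ^ 2 * (inner ℂ η (Pop T amp n η) : ℂ).re := by
    rw [hQdef, htamp n _ ξ η, htinner, inner_self_eq_norm_sq_to_K]
    simp [← Complex.ofReal_pow, Complex.re_ofReal_mul]
  have hmain : (inner ℂ (tens n ξ η) (Pop T amp (n + 1) (tens n ξ η)) : ℂ).re ≤
      c * ‖ξ‖ ^ 2 * (inner ℂ η (Pop T amp n η) : ℂ).re := by
    rw [hPQR]
    calc (inner ℂ (tens n ξ η) ((Q * R) (tens n ξ η)) : ℂ).re
        ≤ c * (inner ℂ (tens n ξ η) (Q (tens n ξ η)) : ℂ).re := hkey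
      _ = c * ‖ξ‖ ^ 2 * (inner ℂ η (Pop T amp n η) : ℂ).re := by rw [hQx]; ring
  refine ⟨hmain, ?_⟩
  have hsq := Real.sqrt_le_sqrt hmain
  calc Real.sqrt ((inner ℂ (tens n ξ η) (Pop T amp (n + 1) (tens n ξ η)) : ℂ).re)
      ≤ Real.sqrt (c * ‖ξ‖ ^ 2 * (inner ℂ η (Pop T amp n η) : ℂ).re) := hsq
    _ = Real.sqrt c * ‖ξ‖ * Real.sqrt ((inner ℂ η (Pop T amp n η) : ℂ).re) := by
        rw [Real.sqrt_mul (by positivity), Real.sqrt_mul hc0, Real.sqrt_sq (norm_nonneg ξ)]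

end
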